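/- Let E=(E^0,E^1,r,s) be a countable directed graph. Then the following are equivalent: (1) E has no loops, i.e. there is no finite path x of positive length with s(x)=r(x); (2) for every nonempty finite subset A of E^0 and every finite path x of positive length, it is not the case that A ⊆ r(A,x); (3) there is no repeatable path, i.e. no finite path x of positive length such that the n-fold concatenation x^n is a path in E for every n ≥ 1; (4) for every finite collection A_1,…,A_m of finite subsets of E^0 and every K ≥ 1, there exists m_0 ≥ 1 such that A_{i_1}E^{≤K}A_{i_2}⋯E^{≤K}A_{i_{n+1}} = ∅ for all n > m_0 and all choices i_1,…,i_{n+1} ∈ {1,…,m}. -/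

import Mathlib

/-! # Common framework for labeled graph C*-algebras

Directed graphs, finite paths, labeled spaces `(E, L, 𝔅̄)` where `𝔅̄` is the
smallest accommodating set closed under relative complements (and containing
the sink parts of its members), loops and generalized loops, representations
of labeled spaces in C*-algebras, gauge actions, infinite projections,
AF algebras, and closed two-sided ideals. -/

noncomputable section

/-- A directed graph with vertex set `V` and edge set `E`. -/
structure DirGraph (V : Type*) (E : Type*) where
  src : E → V
  rng : E → V

variable {V E 𝒜 : Type*}

/-- A (finite) path of positive length in a directed graph: a nonempty list of
composable edges. -/
structure GPath (G : DirGraph V E) where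
  edges : List E
  ne : edges ≠ []
  chain : edges.Chain' fun e f => G.rng e = G.src f

namespace GPath

variable {G : DirGraph V E}

/-- The source vertex of a path. -/
def source (p : GPath G) : V := G.src (p.edges.head p.ne)

/-- The range vertex of a path. -/
def range (p : GPath G) : V := G.rng (p.edges.getLast p.ne)

/-- The length of a path. -/
def length (p : GPath G) : ℕ := p.edges.length

/-- The label word of a path under a labeling `L`. -/
def label (L : E → 𝒜) (p : GPath G) : List 𝒜 := p.edges.map L

end GPath

/-- The set of sinks of a graph (vertices emitting no edge). -/
def DirGraph.sinks (G : DirGraph V E) : Set V := {v | ∀ e, G.src e ≠ v}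

/-- `w ∈ L*(E)`: `w` is the label of some path of positive length. -/
def IsLabelWord (G : DirGraph V E) (L : E → 𝒜) (w : List 𝒜) : Prop :=
  ∃ p : GPath G, p.label L = w

/-- The range `r(w)` of a labeled path `w`. -/
def rngW (G : DirGraph V E) (L : E → 𝒜) (w : List 𝒜) : Set V :=
  {v | ∃ p : GPath G, p.label L = w ∧ p.range = v}

/-- The relative range `r(A, w)` of a labeled path `w` with respect to `A`. -/
def relRng (G : DirGraph V E) (L : E → 𝒜) (A : Set V) (w : List 𝒜) : Set V :=
  {v | ∃ p : GPath G, p.label L = w ∧ p.source ∈ A ∧ p.range = v}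

/-- `L(A E^n)`: labels of paths of length exactly `n` with source in `A`. -/
def labelsFromLen (G : DirGraph V E) (L : E → 𝒜) (A : Set V) (n : ℕ) : Set (List 𝒜) :=
  {w | ∃ p : GPath G, p.source ∈ A ∧ p.length = n ∧ p.label L = w}

/-- `L(A E^{≤n})`: labels of paths of length between `1` and `n` with source in `A`. -/
def labelsFromLe (G : DirGraph V E) (L : E → 𝒜) (A : Set V) (n : ℕ) : Set (List 𝒜) :=
  {w | ∃ p : GPath G, p.source ∈ A ∧ p.length ≤ n ∧ p.label L = w}

/-- `L(A E^{≥n})`: labels of paths of length at least `n` (and at least `1`)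
with source in `A`. -/
def labelsFromGe (G : DirGraph V E) (L : E → 𝒜) (A : Set V) (n : ℕ) : Set (List 𝒜) :=
  {w | ∃ p : GPath G, p.source ∈ A ∧ n ≤ p.length ∧ p.label L = w}

/-- `L(E^n A)`: labels of paths of length exactly `n` with range in `A`. -/
def labelsToLen (G : DirGraph V E) (L : E → 𝒜) (n : ℕ) (A : Set V) : Set (List 𝒜) :=
  {w | ∃ p : GPath G, p.range ∈ A ∧ p.length = n ∧ p.label L = w}

/-- `L(E^{≤l} v)`: labels of paths of length between `1` and `l` with range `v`. -/
def labelsToLe (G : DirGraph V E) (L : E → 𝒜) (l : ℕ) (v : V) : Set (List 𝒜) :=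
  {w | ∃ p : GPath G, p.range = v ∧ p.length ≤ l ∧ p.label L = w}

/-- `𝔅̄`: the smallest accommodating set for `(E, L)` (containing the ranges
`r(α)` for `α ∈ L*(E)` and closed under relative ranges, finite intersections
and finite unions) that is moreover closed under relative complements and
contains `A_sk = A ∩ sinks` for every `A` belonging to it. -/
inductive Bbar (G : DirGraph V E) (L : E → 𝒜) : Set V → Prop
  | base (w : List 𝒜) (hw : IsLabelWord G L w) : Bbar G L (rngW G L w)
  | rel (A : Set V) (w : List 𝒜) (hA : Bbar G L A) (hw : IsLabelWord G L w) :
      Bbar G L (relRng G L A w)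
  | inter (A B : Set V) (hA : Bbar G L A) (hB : Bbar G L B) : Bbar G L (A ∩ B)
  | union (A B : Set V) (hA : Bbar G L A) (hB : Bbar G L B) : Bbar G L (A ∪ B)
  | diff (A B : Set V) (hA : Bbar G L A) (hB : Bbar G L B) : Bbar G L (A \ B)
  | sk (A : Set V) (hA : Bbar G L A) : Bbar G L (A ∩ G.sinks)

/-- The standing assumptions on a labeled space `(E, L, 𝔅̄)`: weakly
left-resolving, set-finite, receiver set-finite, and no sink is a source. -/
structure StandingAssumptions (G : DirGraph V E) (L : E → 𝒜) : Prop where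
  wlr : ∀ A B : Set V, Bbar G L A → Bbar G L B → ∀ w : List 𝒜, IsLabelWord G L w →
    relRng G L A w ∩ relRng G L B w = relRng G L (A ∩ B) w
  setFinite : ∀ A : Set V, Bbar G L A → ∀ n : ℕ, 1 ≤ n → (labelsFromLen G L A n).Finite
  receiverSetFinite : ∀ A : Set V, Bbar G L A → ∀ n : ℕ, 1 ≤ n → (labelsToLen G L n A).Finite
  sinkNotSource : ∀ v ∈ G.sinks, ∃ e, G.rng e = v

/-- The `n`-fold concatenation `w^n` of a word `w`. -/
def wordPow (w : List 𝒜) (n : ℕ) : List 𝒜 := (List.replicate n w).flatten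

/-- A labeled path is repeatable if all its powers `w^n`, `n ≥ 1`, are again
labeled paths. -/
def Repeatable (G : DirGraph V E) (L : E → 𝒜) (w : List 𝒜) : Prop :=
  ∀ n : ℕ, 1 ≤ n → IsLabelWord G L (wordPow w n)

/-- The generalized vertex `[v]_l`: all non-source vertices receiving exactly
the same labeled paths of length at most `l` as `v` does. -/
def gvtx (G : DirGraph V E) (L : E → 𝒜) (l : ℕ) (v : V) : Set V :=
  {u | (∃ e, G.rng e = u) ∧ labelsToLe G L l u = labelsToLe G L l v}

/-- A generalized loop at `A`: a labeled path `α ∈ L(A E^{≥1} A)`. -/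
def IsGenLoop (G : DirGraph V E) (L : E → 𝒜) (A : Set V) (α : List 𝒜) : Prop :=
  ∃ p : GPath G, p.label L = α ∧ p.source ∈ A ∧ p.range ∈ A

/-- A loop at `A`: a generalized loop `α` at `A` such that `A ⊆ r(A, α)`. -/
def IsLoop (G : DirGraph V E) (L : E → 𝒜) (A : Set V) (α : List 𝒜) : Prop :=
  IsGenLoop G L A α ∧ A ⊆ relRng G L A α

/-- The nonempty initial segments (initial paths) of a word `α`. -/
def initialSegs (α : List 𝒜) : Set (List 𝒜) := {w | w ≠ [] ∧ w <+: α}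

/-- A loop `α` at `A` has an exit if (i) the initial segments of `α` form a
proper subset of `L(A E^{≤|α|})`, or (ii) `r(A, α_{[1,i]})` contains a sink for
some `1 ≤ i ≤ |α|`, or (iii) `A` is a proper subset of `r(A, α)`. -/
def HasExitLoop (G : DirGraph V E) (L : E → 𝒜) (A : Set V) (α : List 𝒜) : Prop :=
  initialSegs α ⊂ labelsFromLe G L A α.length ∨
  (∃ k : ℕ, 1 ≤ k ∧ k ≤ α.length ∧ (relRng G L A (α.take k) ∩ G.sinks).Nonempty) ∨
  A ⊂ relRng G L A α

/-- `A_0 E^{≤K} A_1 ⋯ E^{≤K} A_m ≠ ∅`: existence of `m` consecutively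
composable paths, each of length between `1` and `K`, the `j`-th going from
`As j` to `As (j+1)`. -/
def ChainExists (G : DirGraph V E) (As : ℕ → Set V) (K m : ℕ) : Prop :=
  ∃ xs : Fin m → GPath G,
    (∀ j : Fin m, (xs j).length ≤ K ∧ (xs j).source ∈ As j.val ∧
      (xs j).range ∈ As (j.val + 1)) ∧
    ∀ (j : ℕ) (h : j + 1 < m),
      (xs ⟨j, Nat.lt_of_succ_lt h⟩).range = (xs ⟨j + 1, h⟩).source

/-- Same as `ChainExists` but with all paths of length exactly `K`
(i.e. `A_0 E^K A_1 ⋯ E^K A_m ≠ ∅`). -/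
def ChainExistsExact (G : DirGraph V E) (As : ℕ → Set V) (K m : ℕ) : Prop :=
  ∃ xs : Fin m → GPath G,
    (∀ j : Fin m, (xs j).length = K ∧ (xs j).source ∈ As j.val ∧
      (xs j).range ∈ As (j.val + 1)) ∧
    ∀ (j : ℕ) (h : j + 1 < m),
      (xs ⟨j, Nat.lt_of_succ_lt h⟩).range = (xs ⟨j + 1, h⟩).source

/-- Condition (a): for every finite family `A_1, …, A_N` in `𝔅̄` and every
`K ≥ 1` there is `m₀ ≥ 1` such that
`A_{i_1} E^{≤K} A_{i_2} ⋯ E^{≤K} A_{i_n} = ∅` (`n` sets, `n - 1` path factors)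
for all `n > m₀` and all choices of indices. -/
def CondA (G : DirGraph V E) (L : E → 𝒜) : Prop :=
  ∀ (N : ℕ) (As : Fin N → Set V), (∀ i, Bbar G L (As i)) → ∀ K : ℕ, 1 ≤ K →
    ∃ m0 : ℕ, 1 ≤ m0 ∧ ∀ n : ℕ, m0 < n → ∀ ι : ℕ → Fin N,
      ¬ ChainExists G (fun j => As (ι j)) K (n - 1)

/-- A word is agreeable (for level `l`) if it is of the form `β^k β'` with
`β, β' ∈ L(E^{≤l})` and `β'` a nonempty initial segment of `β`. -/
def AgreeableW (G : DirGraph V E) (L : E → 𝒜) (l : ℕ) (α : List 𝒜) : Prop :=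
  ∃ (k : ℕ) (β β' : List 𝒜), IsLabelWord G L β ∧ IsLabelWord G L β' ∧
    β.length ≤ l ∧ β' ≠ [] ∧ β' <+: β ∧ α = wordPow β k ++ β'

/-- A representation of the labeled space `(E, L, 𝔅̄)` in a (C*-)algebra `B`:
projections `p A`, `A ∈ 𝔅̄`, and partial isometries `s a`, `a ∈ 𝒜`, satisfying
the defining relations of a labeled graph C*-algebra. -/
structure LRep (G : DirGraph V E) (L : E → 𝒜) (B : Type*)
    [NonUnitalRing B] [StarRing B] where
  p : Set V → B
  s : 𝒜 → B
  p_empty : p ∅ = 0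
  p_sa : ∀ A : Set V, Bbar G L A → star (p A) = p A
  p_mul : ∀ A A' : Set V, Bbar G L A → Bbar G L A' → p A * p A' = p (A ∩ A')
  p_union : ∀ A A' : Set V, Bbar G L A → Bbar G L A' →
    p (A ∪ A') = p A + p A' - p (A ∩ A')
  s_pi : ∀ a : 𝒜, s a * star (s a) * s a = s a
  p_s : ∀ (A : Set V) (a : 𝒜), Bbar G L A → p A * s a = s a * p (relRng G L A [a])
  s_s : ∀ a : 𝒜, star (s a) * s a = p (rngW G L [a])
  s_orth : ∀ a b : 𝒜, a ≠ b → star (s a) * s b = 0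
  ck : ∀ A : Set V, Bbar G L A →
    p A = (∑ᶠ a ∈ {a : 𝒜 | ∃ e, G.src e ∈ A ∧ L e = a},
      s a * p (relRng G L A [a]) * star (s a)) + p (A ∩ G.sinks)

/-- `s_α` for a word `α`: the product of the partial isometries of its letters
(junk value `0` on the empty word, which is never used). -/
def sWord {B : Type*} [NonUnitalRing B] (s : 𝒜 → B) : List 𝒜 → B
  | [] => 0
  | [a] => s a
  | a :: b :: w => s a * sWord s (b :: w)

/-- The range of a word in `L^#(E)` (`none` is the empty word, with range all
of `E^0`). -/
def owordRng (G : DirGraph V E) (L : E → 𝒜) : Option (List 𝒜) → Set V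
  | none => Set.univ
  | some w => rngW G L w

/-- The relative range of a word in `L^#(E)` with respect to `A` (`none` is
the empty word, with `r(A, ε) = A`). -/
def relRngE (G : DirGraph V E) (L : E → 𝒜) (A : Set V) : Option (List 𝒜) → Set V
  | none => A
  | some w => relRng G L A w

/-- The element `s_α p_A s_β*` of a representation, where `α`, `β` are words in
`L^#(E)` (`none` being the empty word `ε` with `s_ε` the identity). -/
def LRep.elt {B : Type*} [NonUnitalRing B] [StarRing B] {G : DirGraph V E} {L : E → 𝒜}
    (rep : LRep G L B) : Option (List 𝒜) → Set V → Option (List 𝒜) → B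
  | none, A, none => rep.p A
  | some α, A, none => sWord rep.s α * rep.p A
  | none, A, some β => rep.p A * star (sWord rep.s β)
  | some α, A, some β => sWord rep.s α * rep.p A * star (sWord rep.s β)

/-- A projection `q` is infinite if there is a partial isometry `u` with
`u* u = q`, `u u* ≤ q` and `u u* ≠ q`. -/
def IsInfiniteProjection (B : Type*) [NonUnitalRing B] [StarRing B] [PartialOrder B]
    (q : B) : Prop :=
  star q = q ∧ q * q = q ∧ ∃ u : B, star u * u = q ∧ u * star u ≤ q ∧ u * star u ≠ q

/-- A C*-algebra is AF if every finite subset can be approximated within any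
`ε > 0` from a finite-dimensional *-subalgebra. -/
def IsAFAlgebra (B : Type*) [NonUnitalNormedRing B] [StarRing B] [NormedSpace ℂ B] : Prop :=
  ∀ (F : Finset B) (ε : ℝ), 0 < ε →
    ∃ D : NonUnitalStarSubalgebra ℂ B, FiniteDimensional ℂ D ∧
      ∀ x ∈ F, ∃ y ∈ (D : Set B), ‖x - y‖ < ε

/-- A gauge action for a representation: a strongly continuous action of the
circle group by *-automorphisms fixing the projections and scaling the
generating partial isometries. -/
structure GaugeAction {B : Type*} [NonUnitalCStarAlgebra B]
    (G : DirGraph V E) (L : E → 𝒜) (rep : LRep G L B) where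
  γ : Circle → B ≃⋆ₐ[ℂ] B
  γ_mul : ∀ z w : Circle, γ (z * w) = (γ w).trans (γ z)
  γ_continuous : ∀ x : B, Continuous fun z => γ z x
  γ_s : ∀ (z : Circle) (a : 𝒜), γ z (rep.s a) = (z : ℂ) • rep.s a
  γ_p : ∀ (z : Circle) (A : Set V), Bbar G L A → γ z (rep.p A) = rep.p A

/-- The representation generates `B` as a C*-algebra. -/
def GeneratesAlg {B : Type*} [NonUnitalCStarAlgebra B]
    (G : DirGraph V E) (L : E → 𝒜) (rep : LRep G L B) : Prop :=
  closure (NonUnitalStarAlgebra.adjoin ℂ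
    ({x : B | ∃ a : 𝒜, x = rep.s a} ∪ {x : B | ∃ A : Set V, Bbar G L A ∧ x = rep.p A}) : Set B)
    = Set.univ

/-- A closed two-sided ideal of a C*-algebra (as a set). -/
def IsClosedTwoSidedIdealSet (B : Type*) [NonUnitalNormedRing B] [NormedSpace ℂ B]
    (I : Set B) : Prop :=
  IsClosed I ∧ (0 : B) ∈ I ∧ (∀ x ∈ I, ∀ y ∈ I, x + y ∈ I) ∧
    (∀ (c : ℂ), ∀ x ∈ I, c • x ∈ I) ∧ ∀ x ∈ I, ∀ y : B, x * y ∈ I ∧ y * x ∈ I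

/-- The closed two-sided ideal generated by an element. -/
def closedIdealGen (B : Type*) [NonUnitalNormedRing B] [NormedSpace ℂ B] (q : B) : Set B :=
  ⋂₀ {I : Set B | IsClosedTwoSidedIdealSet B I ∧ q ∈ I}


section Aux
variable {V E : Type*} {G : DirGraph V E}

lemma myHeadAppend {α : Type*} {l₁ l₂ : List α} (h : l₁ ≠ []) (h2 : l₁ ++ l₂ ≠ []) :
    (l₁ ++ l₂).head h2 = l₁.head h := by
  cases l₁ with
  | nil => exact absurd rfl h
  | cons a t => rfl

lemma myGetLastAppend {α : Type*} {l₁ l₂ : List α} (h : l₂ ≠ []) (h2 : l₁ ++ l₂ ≠ []) :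
    (l₁ ++ l₂).getLast h2 = l₂.getLast h := by
  rw [List.getLast_append]
  simp [h]

def GPath.gapp (p q : GPath G) (h : p.range = q.source) : GPath G where
  edges := p.edges ++ q.edges
  ne := by simp [p.ne]
  chain := p.chain.append q.chain (by
    intro x hx y hy
    rw [List.getLast?_eq_getLast p.ne, Option.mem_def, Option.some.injEq] at hx
    rw [List.head?_eq_head q.ne, Option.mem_def, Option.some.injEq] at hy
    subst hx; subst hy
    exact h)

lemma GPath.gapp_source (p q : GPath G) (h : p.range = q.source) :
    (p.gapp q h).source = p.source := by
  simp only [GPath.source, GPath.gapp]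
  rw [myHeadAppend p.ne]

lemma GPath.gapp_range (p q : GPath G) (h : p.range = q.source) :
    (p.gapp q h).range = q.range := by
  simp only [GPath.range, GPath.gapp]
  rw [myGetLastAppend q.ne]

lemma myHeadFlatRep {α : Type*} (l : List α) (hl : l ≠ []) :
    ∀ n, 1 ≤ n → ((List.replicate n l).flatten).head? = l.head? := by
  intro n hn
  obtain ⟨m, rfl⟩ : ∃ m, n = m + 1 := ⟨n - 1, by omega⟩
  rw [List.replicate_succ, List.flatten_cons]
  cases l with
  | nil => exact absurd rfl hl
  | cons a t => rfl

lemma myChainFlatRep {α : Type*} {R : α → α → Prop} {l : List α} (hl : l ≠ [])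
    (hc : l.Chain' R) (hb : R (l.getLast hl) (l.head hl)) :
    ∀ n, ((List.replicate n l).flatten).Chain' R := by
  intro n
  induction n with
  | zero => exact List.isChain_nil
  | succ m ih =>
    rw [List.replicate_succ, List.flatten_cons]
    refine hc.append ih ?_
    intro x hx y hy
    rw [List.getLast?_eq_getLast hl, Option.mem_def, Option.some.injEq] at hx
    cases m with
    | zero => simp at hy
    | succ k =>
      rw [myHeadFlatRep l hl (k + 1) (by omega), List.head?_eq_head hl,
        Option.mem_def, Option.some.injEq] at hy
      subst hx; subst hy
      exact hb

end Aux

/-- Proposition 3.1. For a countable directed graph `E` the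
following are equivalent: (1) `E` has no loops; (2) `¬ A ⊆ r(A, x)` for every
nonempty finite vertex set `A` and every path `x` (where `r(A,x) = {r(x)}` if
`s(x) ∈ A` and `∅` otherwise); (3) `E` has no repeatable paths; (4) for every
finite family of finite vertex sets and every `K ≥ 1` there is `m₀ ≥ 1` with
`A_{i_1}E^{≤K}A_{i_2}⋯E^{≤K}A_{i_{n+1}} = ∅` for all `n > m₀` and all choices
of indices. -/
theorem graph_no_loops_tfae {V E : Type*} [Countable V] [Countable E]
    (G : DirGraph V E) :
    List.TFAE
      [(¬ ∃ p : GPath G, p.source = p.range),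
       (∀ A : Set V, A.Finite → A.Nonempty → ∀ x : GPath G,
          ¬ A ⊆ {v | x.source ∈ A ∧ v = x.range}),
       (¬ ∃ x : GPath G, ∀ n : ℕ, 1 ≤ n →
          ∃ q : GPath G, q.edges = (List.replicate n x.edges).flatten),
       (∀ (N : ℕ) (As : Fin N → Set V), (∀ i, (As i).Finite) → ∀ K : ℕ, 1 ≤ K →
          ∃ m0 : ℕ, 1 ≤ m0 ∧ ∀ n : ℕ, m0 < n → ∀ ι : ℕ → Fin N,
            ¬ ChainExists G (fun j => As (ι j)) K n)] := by
  tfae_have 1 → 2 := by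
    intro h1 A hfin hne x hsub
    obtain ⟨a, ha⟩ := hne
    obtain ⟨hs, -⟩ := hsub ha
    exact h1 ⟨x, (hsub hs).2⟩
  tfae_have 2 → 1 := by
    rintro h2 ⟨x, hx⟩
    refine h2 {x.source} (Set.finite_singleton _) ⟨_, rfl⟩ x ?_
    intro v hv
    rw [Set.mem_singleton_iff] at hv
    subst hv
    exact ⟨Set.mem_singleton _, hx⟩
  tfae_have 1 → 3 := by
    rintro h1 ⟨x, hx⟩
    obtain ⟨q, hq⟩ := hx 2 (by norm_num)
    have hc := q.chain
    rw [hq] at hc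
    have h2 : (List.replicate 2 x.edges).flatten = x.edges ++ x.edges := by
      simp [List.replicate_succ]
    rw [h2] at hc
    replace hc := List.isChain_append.mp hc
    obtain ⟨-, -, hb⟩ := hc
    have hb' := hb (x.edges.getLast x.ne)
      (by rw [List.getLast?_eq_getLast x.ne]; rfl)
      (x.edges.head x.ne) (by rw [List.head?_eq_head x.ne]; rfl)
    exact h1 ⟨x, hb'.symm⟩
  tfae_have 3 → 1 := by
    rintro h3 ⟨x, hx⟩
    refine h3 ⟨x, fun n hn => ?_⟩
    refine ⟨⟨(List.replicate n x.edges).flatten, ?_,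
      myChainFlatRep x.ne x.chain hx.symm n⟩, rfl⟩
    obtain ⟨m, rfl⟩ : ∃ m, n = m + 1 := ⟨n - 1, by omega⟩
    rw [List.replicate_succ, List.flatten_cons]
    simp [x.ne]
  tfae_have 1 → 4 := by
    intro h1 N As hfin K hK
    have hU : (⋃ i, As i).Finite := Set.finite_iUnion hfin
    refine ⟨hU.toFinset.card + 1, by omega, ?_⟩
    rintro n hn ι ⟨xs, hx, hcomp⟩
    have key : ∀ i j : Fin n, i < j → (xs i).source = (xs j).source → False := by
      intro i j hlt heq
      have concat : ∀ d (hd : i.val + d < n), ∃ p : GPath G,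
          p.source = (xs i).source ∧ p.range = (xs ⟨i.val + d, hd⟩).range := by
        intro d
        induction d with
        | zero =>
          intro hd
          refine ⟨xs i, rfl, ?_⟩
          have : (⟨i.val + 0, hd⟩ : Fin n) = i := Fin.ext (by simp)
          rw [this]
        | succ d ih =>
          intro hd
          have hd' : i.val + d < n := by omega
          obtain ⟨p, hps, hpr⟩ := ih hd'
          have hd2 : i.val + d + 1 < n := by omega
          have hcv : (xs ⟨i.val + d, hd'⟩).range = (xs ⟨i.val + d + 1, hd2⟩).source :=
            hcomp (i.val + d) hd2
          refine ⟨p.gapp (xs ⟨i.val + d + 1, hd2⟩) (by rw [hpr, hcv]), ?_, ?_⟩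
          · rw [GPath.gapp_source]; exact hps
          · rw [GPath.gapp_range]; rfl
      have hd : i.val + (j.val - 1 - i.val) < n := by omega
      obtain ⟨p, hps, hpr⟩ := concat (j.val - 1 - i.val) hd
      have e1 : (⟨i.val + (j.val - 1 - i.val), hd⟩ : Fin n) = ⟨j.val - 1, by omega⟩ :=
        Fin.ext (by simp; omega)
      rw [e1] at hpr
      have hj : j.val - 1 + 1 < n := by omega
      have hcv : (xs ⟨j.val - 1, by omega⟩).range = (xs ⟨j.val - 1 + 1, hj⟩).source :=
        hcomp (j.val - 1) hj
      have e2 : (⟨j.val - 1 + 1, hj⟩ : Fin n) = j := Fin.ext (by simp; omega)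
      rw [e2] at hcv
      exact h1 ⟨p, by rw [hps, hpr, hcv, ← heq]⟩
    have hmaps : ∀ j ∈ (Finset.univ : Finset (Fin n)),
        (xs j).source ∈ hU.toFinset := by
      intro j _
      rw [Set.Finite.mem_toFinset]
      exact Set.mem_iUnion.mpr ⟨ι j.val, (hx j).2.1⟩
    have hcard : hU.toFinset.card < (Finset.univ : Finset (Fin n)).card := by
      simpa using by omega
    obtain ⟨i, -, j, -, hij, heq⟩ :=
      Finset.exists_ne_map_eq_of_card_lt_of_maps_to hcard hmaps
    rcases lt_or_gt_of_ne hij with h | h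
    · exact key i j h heq
    · exact key j i h heq.symm
  tfae_have 4 → 1 := by
    rintro h4 ⟨x, hx⟩
    have hK : 1 ≤ x.length := List.length_pos_iff.mpr x.ne
    obtain ⟨m0, hm0, h⟩ := h4 1 (fun _ => {x.source})
      (fun _ => Set.finite_singleton _) x.length hK
    refine h (m0 + 1) (by omega) (fun _ => 0) ?_
    refine ⟨fun _ => x, fun j => ⟨le_refl _, Set.mem_singleton _, ?_⟩, fun j hj => hx.symm⟩
    rw [Set.mem_singleton_iff]
    exact hx.symm
  tfae_finish


end
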